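/- arXiv:2511.06774 — 2 statements merged into one kernel-verified Lean document; each statement's English description precedes it below -/
import Mathlib

section
/- Suppose α_k ≥ c_1·k^{-q} and α_k ≤ C_1·k^{-q} for large k with 1/2 < q < 1, and ε_k ≤ C_2·k^{-p} with p > 0 and q + 2p > 1. Then L_K := (1/(K α_K))·∑_{k=0}^{K-1} α_k ε_k² satisfies L_K = O(K^{-(1-q)}), and in particular L_K → 0 as K → ∞. -/
open Filter

theorem L_K_rate_case1 (q p c₁ C₁ C₂ : ℝ) (hq : 1 / 2 < q) (hq1 : q < 1) (hp : 0 < p)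
    (hcase : 1 < q + 2 * p) (hc₁ : 0 < c₁) (hC₁ : 0 < C₁) (hC₂ : 0 < C₂)
    (α ε : ℕ → ℝ) (hαpos : ∀ k, 0 < α k) (hεpos : ∀ k, 0 ≤ ε k)
    (hαbound : ∀ᶠ k : ℕ in atTop, c₁ * (k : ℝ) ^ (-q) ≤ α k ∧ α k ≤ C₁ * (k : ℝ) ^ (-q))
    (hεbound : ∀ᶠ k : ℕ in atTop, ε k ≤ C₂ * (k : ℝ) ^ (-p)) :
    (∃ C : ℝ, ∀ᶠ K : ℕ in atTop,
        (1 / ((K : ℝ) * α K)) * ∑ k ∈ Finset.range K, α k * (ε k) ^ 2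
          ≤ C * (K : ℝ) ^ (-(1 - q))) ∧
      Tendsto (fun K : ℕ =>
        (1 / ((K : ℝ) * α K)) * ∑ k ∈ Finset.range K, α k * (ε k) ^ 2) atTop (nhds 0) := by
  obtain ⟨N₀, hN₀⟩ := eventually_atTop.mp (hαbound.and hεbound)
  set N := max N₀ 1 with hN
  set g : ℕ → ℝ := fun k => C₁ * C₂ ^ 2 * (k : ℝ) ^ (-(q + 2 * p)) with hgdef
  have hg : Summable g := by
    have h := (Real.summable_nat_rpow (p := -(q + 2 * p))).mpr (by linarith)
    exact h.mul_left _
  have hgnn : ∀ k, 0 ≤ g k := fun k => by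
    have : (0:ℝ) ≤ (k : ℝ) ^ (-(q + 2 * p)) := Real.rpow_nonneg (Nat.cast_nonneg k) _
    positivity
  have hfg : ∀ k, N ≤ k → α k * ε k ^ 2 ≤ g k := by
    intro k hk
    have hk1 : (1:ℕ) ≤ k := le_trans (le_max_right _ _) hk
    have hkpos : (0:ℝ) < (k : ℝ) := by exact_mod_cast Nat.lt_of_lt_of_le Nat.zero_lt_one hk1
    obtain ⟨⟨h1, h2⟩, h3⟩ := hN₀ k (le_trans (le_max_left _ _) hk)
    have hε2 : ε k ^ 2 ≤ (C₂ * (k : ℝ) ^ (-p)) ^ 2 := pow_le_pow_left₀ (hεpos k) h3 2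
    have hαnn : 0 ≤ α k := (hαpos k).le
    calc α k * ε k ^ 2 ≤ (C₁ * (k : ℝ) ^ (-q)) * (C₂ * (k : ℝ) ^ (-p)) ^ 2 := by
          apply mul_le_mul h2 hε2 (by positivity) (by positivity)
      _ = g k := by
          show C₁ * (k : ℝ) ^ (-q) * (C₂ * (k : ℝ) ^ (-p)) ^ 2 = C₁ * C₂ ^ 2 * (k : ℝ) ^ (-(q + 2 * p))
          rw [show -(q + 2 * p) = (-q) + ((-p) + (-p)) by ring,
            Real.rpow_add hkpos, Real.rpow_add hkpos]
          ring
  set S : ℝ := (∑ k ∈ Finset.range N, α k * ε k ^ 2) + ∑' k, g k with hSdef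
  have hsnn : ∀ K : ℕ, 0 ≤ ∑ k ∈ Finset.range K, α k * ε k ^ 2 := fun K =>
    Finset.sum_nonneg fun k _ => mul_nonneg (hαpos k).le (sq_nonneg _)
  have hSnn : 0 ≤ S := add_nonneg (hsnn N) (tsum_nonneg hgnn)
  have hsum : ∀ K, N ≤ K → ∑ k ∈ Finset.range K, α k * ε k ^ 2 ≤ S := by
    intro K hK
    rw [← Finset.sum_range_add_sum_Ico _ hK]
    have h1 : ∑ k ∈ Finset.Ico N K, α k * ε k ^ 2 ≤ ∑ k ∈ Finset.Ico N K, g k :=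
      Finset.sum_le_sum fun k hk => hfg k (Finset.mem_Ico.mp hk).1
    have h2 : ∑ k ∈ Finset.Ico N K, g k ≤ ∑' k, g k :=
      Summable.sum_le_tsum _ (fun k _ => hgnn k) hg
    rw [hSdef]
    linarith
  have key : ∀ᶠ K : ℕ in atTop,
      (1 / ((K : ℝ) * α K)) * ∑ k ∈ Finset.range K, α k * (ε k) ^ 2
        ≤ (S / c₁) * (K : ℝ) ^ (-(1 - q)) := by
    filter_upwards [eventually_ge_atTop N] with K hK
    have hK1 : (1:ℕ) ≤ K := le_trans (le_max_right _ _) hK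
    have hKpos : (0:ℝ) < (K : ℝ) := by exact_mod_cast Nat.lt_of_lt_of_le Nat.zero_lt_one hK1
    obtain ⟨⟨h1, _⟩, _⟩ := hN₀ K (le_trans (le_max_left _ _) hK)
    have hpow : (K : ℝ) * ((K : ℝ) ^ (-q)) = (K : ℝ) ^ (1 - q) := by
      rw [show (1:ℝ) - q = 1 + (-q) by ring, Real.rpow_add hKpos, Real.rpow_one]
    have hpowpos : (0:ℝ) < (K : ℝ) ^ (1 - q) := Real.rpow_pos_of_pos hKpos _
    have hKα : c₁ * (K : ℝ) ^ (1 - q) ≤ (K : ℝ) * α K := by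
      calc c₁ * (K : ℝ) ^ (1 - q) = (K : ℝ) * (c₁ * (K : ℝ) ^ (-q)) := by rw [← hpow]; ring
        _ ≤ (K : ℝ) * α K := by
            apply mul_le_mul_of_nonneg_left h1 hKpos.le
    have hdiv : 1 / ((K : ℝ) * α K) ≤ 1 / (c₁ * (K : ℝ) ^ (1 - q)) :=
      one_div_le_one_div_of_le (by positivity) hKα
    have heq : 1 / (c₁ * (K : ℝ) ^ (1 - q)) * S = (S / c₁) * (K : ℝ) ^ (-(1 - q)) := by
      rw [Real.rpow_neg hKpos.le]
      field_simp
    calc (1 / ((K : ℝ) * α K)) * ∑ k ∈ Finset.range K, α k * (ε k) ^ 2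
        ≤ (1 / (c₁ * (K : ℝ) ^ (1 - q))) * S := by
          apply mul_le_mul hdiv (hsum K hK) (hsnn K) (by positivity)
      _ = (S / c₁) * (K : ℝ) ^ (-(1 - q)) := heq
  constructor
  · exact ⟨S / c₁, key⟩
  · have hlim : Tendsto (fun K : ℕ => (S / c₁) * (K : ℝ) ^ (-(1 - q))) atTop (nhds 0) := by
      have h1 : Tendsto (fun K : ℕ => (K : ℝ) ^ (-(1 - q))) atTop (nhds 0) :=
        (tendsto_rpow_neg_atTop (by linarith)).comp tendsto_natCast_atTop_atTop
      simpa using h1.const_mul (S / c₁)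
    apply squeeze_zero' _ key hlim
    filter_upwards with K
    exact mul_nonneg (div_nonneg zero_le_one (mul_nonneg (Nat.cast_nonneg K) (hαpos K).le)) (hsnn K)
end

section
/- Let f: ℝ^d → ℝ be L-smooth and bounded below by f_inf, let ζ > 1/2, η > 0, and constants Ã, B̃, C̃ ≥ 0, ε ≥ 0, and suppose a step θ' = θ − α z with 0 < α ≤ ρ(2ζ−1)/(ζ L B̃) for some 0 < ρ < 1 satisfies ⟨∇f(θ), z⟩ ≥ (1 − 1/(2ζ))‖∇f(θ)‖² − (ζ/2)ε² and ‖z‖² ≤ 2Ã(f(θ) − f_inf) + B̃‖∇f(θ)‖² + C̃ + (1+η)ε². Then, with ρ̄ = (1−ρ)(2ζ−1)/ζ, (ρ̄/2)·α·‖∇f(θ)‖² ≤ (1 + α² L Ã)(f(θ) − f_inf) − (f(θ') − f_inf) + (α² L / 2)(C̃ + (1+η)ε²) + (ζ ε²/2)·α. -/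
open scoped RealInnerProductSpace

lemma my_descent_lemma {d : ℕ} (f : EuclideanSpace ℝ (Fin d) → ℝ)
    (g : EuclideanSpace ℝ (Fin d) → EuclideanSpace ℝ (Fin d)) (L : NNReal)
    (hgrad : ∀ x, HasGradientAt f (g x) x) (hLip : LipschitzWith L g)
    (x y : EuclideanSpace ℝ (Fin d)) :
    f y ≤ f x + ⟪g x, y - x⟫ + (L : ℝ) / 2 * ‖y - x‖ ^ 2 := by
  set v := y - x with hv
  have hcontg : Continuous g := hLip.continuous
  have hφ : ∀ t : ℝ, HasDerivAt (fun t : ℝ => f (x + t • v)) ⟪g (x + t • v), v⟫ t := by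
    intro t
    have hc : HasDerivAt (fun t : ℝ => x + t • v) v t := by
      simpa using ((hasDerivAt_id t).smul_const v).const_add x
    have hf := (hasGradientAt_iff_hasFDerivAt.mp (hgrad (x + t • v)))
    have := hf.comp_hasDerivAt t hc
    simpa [InnerProductSpace.toDual_apply_apply, Function.comp_def] using this
  have hcont : Continuous fun t : ℝ => ⟪g (x + t • v), v⟫ := by
    exact (hcontg.comp (by continuity)).inner continuous_const
  have hint : f (x + (1:ℝ) • v) - f (x + (0:ℝ) • v)
      = ∫ t in (0:ℝ)..1, ⟪g (x + t • v), v⟫ := by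
    exact (intervalIntegral.integral_eq_sub_of_hasDerivAt
      (fun t _ => hφ t) (hcont.intervalIntegrable 0 1)).symm
  have hxy : x + (1:ℝ) • v = y := by simp [hv]
  have hx0 : x + (0:ℝ) • v = x := by simp
  have hbound : ∫ t in (0:ℝ)..1, ⟪g (x + t • v), v⟫
      ≤ ∫ t in (0:ℝ)..1, (⟪g x, v⟫ + (L : ℝ) * ‖v‖ ^ 2 * t) := by
    apply intervalIntegral.integral_mono_on zero_le_one
      (hcont.intervalIntegrable 0 1)
      ((continuous_const.add (continuous_const.mul continuous_id)).intervalIntegrable 0 1)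
    intro t ht
    have h1 : ⟪g (x + t • v) - g x, v⟫ ≤ ‖g (x + t • v) - g x‖ * ‖v‖ :=
      real_inner_le_norm _ _
    have h2 : ‖g (x + t • v) - g x‖ ≤ (L : ℝ) * (t * ‖v‖) := by
      have := hLip.dist_le_mul (x + t • v) x
      simp only [dist_eq_norm] at this
      calc ‖g (x + t • v) - g x‖ ≤ (L : ℝ) * ‖x + t • v - x‖ := this
        _ = (L : ℝ) * (|t| * ‖v‖) := by rw [add_sub_cancel_left, norm_smul]; simp
        _ = (L : ℝ) * (t * ‖v‖) := by rw [abs_of_nonneg ht.1]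
    have h3 : ⟪g (x + t • v), v⟫ = ⟪g x, v⟫ + ⟪g (x + t • v) - g x, v⟫ := by
      rw [inner_sub_left]; ring
    have hLv : (0:ℝ) ≤ ‖v‖ := norm_nonneg _
    have h4 : ‖g (x + t • v) - g x‖ * ‖v‖ ≤ (L : ℝ) * (t * ‖v‖) * ‖v‖ :=
      mul_le_mul_of_nonneg_right h2 hLv
    simp only [Pi.add_apply, Pi.mul_apply, id]
    nlinarith
  have hintval : ∫ t in (0:ℝ)..1, (⟪g x, v⟫ + (L : ℝ) * ‖v‖ ^ 2 * t)
      = ⟪g x, v⟫ + (L : ℝ) / 2 * ‖v‖ ^ 2 := by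
    rw [intervalIntegral.integral_add (intervalIntegrable_const)
      ((by fun_prop : Continuous fun t : ℝ => (L : ℝ) * ‖v‖ ^ 2 * t).intervalIntegrable 0 1),
      intervalIntegral.integral_const_mul]
    simp [integral_id]
    ring
  rw [hxy, hx0] at hint
  linarith [hint, hbound, hintval.le, hintval.ge]

theorem one_step_descent_inexact {d : ℕ} (f : EuclideanSpace ℝ (Fin d) → ℝ)
    (g : EuclideanSpace ℝ (Fin d) → EuclideanSpace ℝ (Fin d)) (L : NNReal)
    (hgrad : ∀ x, HasGradientAt f (g x) x) (hLip : LipschitzWith L g)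
    (f_inf : ℝ) (hbelow : ∀ x, f_inf ≤ f x)
    (ζ η ρ Atil Btil Ctil ε α : ℝ) (hζ : 1 / 2 < ζ) (hη : 0 < η) (hρ0 : 0 < ρ) (hρ1 : ρ < 1)
    (hAtil : 0 ≤ Atil) (hBtil : 0 ≤ Btil) (hCtil : 0 ≤ Ctil) (hε : 0 ≤ ε)
    (hα0 : 0 < α) (hα : α ≤ ρ * (2 * ζ - 1) / (ζ * (L : ℝ) * Btil))
    (θ z : EuclideanSpace ℝ (Fin d))
    (hinner : ⟪g θ, z⟫ ≥ (1 - 1 / (2 * ζ)) * ‖g θ‖ ^ 2 - (ζ / 2) * ε ^ 2)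
    (hnorm : ‖z‖ ^ 2 ≤ 2 * Atil * (f θ - f_inf) + Btil * ‖g θ‖ ^ 2 + Ctil + (1 + η) * ε ^ 2) :
    ((1 - ρ) * (2 * ζ - 1) / ζ) / 2 * α * ‖g θ‖ ^ 2
      ≤ (1 + α ^ 2 * (L : ℝ) * Atil) * (f θ - f_inf) - (f (θ - α • z) - f_inf)
        + α ^ 2 * (L : ℝ) / 2 * (Ctil + (1 + η) * ε ^ 2) + (ζ * ε ^ 2 / 2) * α := by
  have hζ0 : (0:ℝ) < ζ := by linarith
  by_cases hLB : ζ * (L : ℝ) * Btil = 0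
  · rw [hLB, div_zero] at hα; linarith
  · have hLB' : 0 < ζ * (L : ℝ) * Btil :=
      lt_of_le_of_ne (by positivity) (Ne.symm hLB)
    have hkey2 : α * (ζ * (L : ℝ) * Btil) ≤ ρ * (2 * ζ - 1) :=
      (le_div_iff₀ hLB').mp hα
    -- descent lemma
    have hd := my_descent_lemma f g L hgrad hLip θ (θ - α • z)
    have e1 : θ - α • z - θ = -(α • z) := by abel
    rw [e1] at hd
    have e2 : ⟪g θ, -(α • z)⟫ = -(α * ⟪g θ, z⟫) := by
      rw [inner_neg_right, real_inner_smul_right]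
    have e3 : ‖-(α • z)‖ ^ 2 = α ^ 2 * ‖z‖ ^ 2 := by
      rw [norm_neg, norm_smul]
      simp [abs_of_pos hα0, mul_pow]
    rw [e2, e3] at hd
    -- rewrite inner bound without division
    have hinner' : (2 * ζ - 1) * ‖g θ‖ ^ 2 - ζ ^ 2 * ε ^ 2 ≤ (2 * ζ) * ⟪g θ, z⟫ := by
      have h2 : (2 * ζ) * ((1 - 1 / (2 * ζ)) * ‖g θ‖ ^ 2 - (ζ / 2) * ε ^ 2)
          ≤ (2 * ζ) * ⟪g θ, z⟫ := mul_le_mul_of_nonneg_left hinner (by linarith)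
      have h3 : (2 * ζ) * ((1 - 1 / (2 * ζ)) * ‖g θ‖ ^ 2 - (ζ / 2) * ε ^ 2)
          = (2 * ζ - 1) * ‖g θ‖ ^ 2 - ζ ^ 2 * ε ^ 2 := by field_simp
      linarith [h3.ge, h3.le]
    -- clear the division in the goal
    have heq : ((1 - ρ) * (2 * ζ - 1) / ζ) / 2 * α * ‖g θ‖ ^ 2
        = ((1 - ρ) * (2 * ζ - 1) * α * ‖g θ‖ ^ 2) / (2 * ζ) := by
      rw [div_div, div_mul_eq_mul_div, div_mul_eq_mul_div,
        div_eq_div_iff (by linarith) (by linarith)]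
      ring
    rw [heq, div_le_iff₀ (by linarith : (0:ℝ) < 2 * ζ)]
    nlinarith [mul_le_mul_of_nonneg_left hd (by linarith : (0:ℝ) ≤ 2 * ζ),
      mul_le_mul_of_nonneg_left hnorm (by positivity : (0:ℝ) ≤ ζ * (L : ℝ) * α ^ 2),
      mul_le_mul_of_nonneg_left hinner' hα0.le,
      mul_le_mul_of_nonneg_right hkey2 (by positivity : (0:ℝ) ≤ α * ‖g θ‖ ^ 2)]
end
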